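/- For every integer j ≥ 2 and every real s > 0, Π_{k=1}^{j−1} [ (∫_0^1 t^{s−1+k/j} (1−t)^{k/(j(j−1)) − 1} dt) / B(k/j + 1, k/(j(j−1))) ] = (1/√(2π)) · (1/√(j(j−1))) · [j^{j}/(j−1)^{j−1}] · Π_{k=1}^{j−1} [Γ(s + k/j)/Γ(s + k/(j−1))]. -/

import Mathlib

open Real

/-- The Beta function `B(a,b) = Γ(a)Γ(b)/Γ(a+b)`. -/
noncomputable def betaFn (a b : ℝ) : ℝ :=
  Real.Gamma a * Real.Gamma b / Real.Gamma (a + b)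

lemma beta_integral_eq {a b : ℝ} (ha : 0 < a) (hb : 0 < b) :
    ∫ t in (0:ℝ)..1, t ^ (a - 1) * (1 - t) ^ (b - 1) = betaFn a b := by
  have key : Complex.betaIntegral a b =
      ((∫ t in (0:ℝ)..1, t ^ (a - 1) * (1 - t) ^ (b - 1) : ℝ) : ℂ) := by
    rw [Complex.betaIntegral, ← intervalIntegral.integral_ofReal]
    refine intervalIntegral.integral_congr fun x hx => ?_
    rw [Set.uIcc_of_le zero_le_one] at hx
    rw [Complex.ofReal_mul, Complex.ofReal_cpow hx.1,
      Complex.ofReal_cpow (by linarith [hx.2] : (0:ℝ) ≤ 1 - x)]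
    push_cast
    ring
  have h2 := Complex.Gamma_mul_Gamma_eq_betaIntegral
    (s := (a:ℂ)) (t := (b:ℂ)) (by simpa using ha) (by simpa using hb)
  rw [key] at h2
  have hab : Real.Gamma (a + b) ≠ 0 := (Real.Gamma_pos_of_pos (by linarith)).ne'
  have := congrArg Complex.re h2
  simp only [← Complex.ofReal_add, Complex.Gamma_ofReal, ← Complex.ofReal_mul,
    Complex.ofReal_re] at this
  rw [betaFn, eq_div_iff hab]
  linear_combination -this

lemma abs_one_sub_exp (θ : ℝ) (h0 : 0 ≤ θ) (h1 : θ ≤ 2 * π) :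
    ‖1 - Complex.exp (θ * Complex.I)‖ = 2 * Real.sin (θ / 2) := by
  have hsin : 0 ≤ Real.sin (θ / 2) := Real.sin_nonneg_of_nonneg_of_le_pi (by linarith) (by linarith)
  have hcos : Real.cos θ = 1 - 2 * Real.sin (θ / 2) ^ 2 := by
    have h1 := Real.cos_two_mul (θ / 2)
    rw [show 2 * (θ / 2) = θ by ring] at h1
    have h2 := Real.sin_sq_add_cos_sq (θ / 2)
    nlinarith
  rw [Complex.norm_def, Complex.normSq_apply]
  simp only [Complex.sub_re, Complex.sub_im, Complex.one_re, Complex.one_im,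
    Complex.exp_ofReal_mul_I_re, Complex.exp_ofReal_mul_I_im]
  rw [show (1 - Real.cos θ) * (1 - Real.cos θ) + (0 - Real.sin θ) * (0 - Real.sin θ)
      = (2 * Real.sin (θ / 2)) ^ 2 by nlinarith [Real.sin_sq_add_cos_sq θ]]
  exact Real.sqrt_sq (by linarith)

lemma two_sin_prod (n : ℕ) (hn : 1 ≤ n) :
    ∏ k ∈ Finset.range (n - 1), (2 * Real.sin (π * (k + 1) / n)) = n := by
  obtain ⟨m, rfl⟩ : ∃ m, n = m + 1 := ⟨n - 1, (Nat.succ_pred_eq_of_pos hn).symm⟩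
  have hμ := Complex.isPrimitiveRoot_exp (m + 1) (Nat.succ_ne_zero m)
  have hprod := hμ.prod_one_sub_pow_eq_order
  have habs := congrArg (‖·‖) hprod
  rw [norm_prod] at habs
  push_cast at habs ⊢
  have hn' : (0:ℝ) < (m:ℝ) + 1 := by positivity
  have : ∀ k ∈ Finset.range m,
      ‖1 - Complex.exp (2 * π * Complex.I / (m+1)) ^ (k + 1)‖
        = 2 * Real.sin (π * (k + 1) / (m + 1)) := by
    intro k hk
    have hk' : (k:ℝ) + 1 ≤ m := by
      have := Finset.mem_range.mp hk; exact_mod_cast Nat.succ_le_of_lt this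
    have hθ : Complex.exp (2 * π * Complex.I / (m+1)) ^ (k + 1)
        = Complex.exp ((2 * π * (k+1) / (m+1) : ℝ) * Complex.I) := by
      rw [← Complex.exp_nat_mul]
      push_cast
      ring_nf
    rw [hθ, abs_one_sub_exp, show 2 * π * ((k:ℝ)+1) / ((m:ℝ)+1) / 2
        = π * ((k:ℝ)+1) / ((m:ℝ)+1) by ring]
    · positivity
    · rw [div_le_iff₀ hn']
      have : (0:ℝ) < π := Real.pi_pos
      nlinarith
  rw [Finset.prod_congr rfl this] at habs
  rw [habs]
  rw [show ((m:ℂ) + 1) = (((m:ℝ) + 1 : ℝ) : ℂ) by push_cast; ring]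
  rw [Complex.norm_real, Real.norm_eq_abs, abs_of_pos hn']

lemma gamma_prod (n : ℕ) (hn : 1 ≤ n) :
    ∏ k ∈ Finset.range (n - 1), Real.Gamma (((k:ℝ) + 1) / n)
      = Real.sqrt ((2 * π) ^ (n - 1) / n) := by
  obtain ⟨m, rfl⟩ : ∃ m, n = m + 1 := ⟨n - 1, (Nat.succ_pred_eq_of_pos hn).symm⟩
  simp only [Nat.add_sub_cancel]
  set n : ℕ := m + 1 with hn'
  have hnR : (0:ℝ) < (n:ℝ) := by positivity
  set P : ℝ := ∏ k ∈ Finset.range m, Real.Gamma (((k:ℝ) + 1) / n) with hP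
  have hPpos : 0 < P := Finset.prod_pos fun k hk => Real.Gamma_pos_of_pos (by positivity)
  have hrefl : P = ∏ k ∈ Finset.range m, Real.Gamma (1 - ((k:ℝ) + 1) / n) := by
    rw [hP, ← Finset.prod_range_reflect]
    refine Finset.prod_congr rfl fun k hk => ?_
    have hk' : k < m := Finset.mem_range.mp hk
    congr 1
    have hcast : ((m - 1 - k : ℕ) : ℝ) = (m:ℝ) - ((k:ℝ) + 1) := by
      have hnat : m - 1 - k + (k + 1) = m := by omega
      have := congrArg (Nat.cast : ℕ → ℝ) hnat
      push_cast at this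
      linarith
    have hnn : (n:ℝ) = (m:ℝ) + 1 := by rw [hn']; push_cast; ring
    rw [hcast, hnn]
    have : (m:ℝ) + 1 ≠ 0 := by positivity
    field_simp
    ring
  have hsq : P * P = (2 * π) ^ m / n := by
    nth_rewrite 2 [hrefl]
    rw [← Finset.prod_mul_distrib]
    have : ∀ k ∈ Finset.range m, Real.Gamma (((k:ℝ) + 1) / n) * Real.Gamma (1 - ((k:ℝ) + 1) / n)
        = π / Real.sin (π * ((k:ℝ) + 1) / n) := by
      intro k hk
      rw [Real.Gamma_mul_Gamma_one_sub]
      ring_nf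
    rw [Finset.prod_congr rfl this, Finset.prod_div_distrib, Finset.prod_const, Finset.card_range]
    have hsin := two_sin_prod n (by omega)
    simp only [hn', Nat.add_sub_cancel] at hsin
    have h2 : ∏ k ∈ Finset.range m, (2 * Real.sin (π * ((k:ℝ)+1) / n)) = (n:ℝ) := by
      convert hsin using 2 <;> push_cast <;> ring
    rw [Finset.prod_mul_distrib, Finset.prod_const, Finset.card_range] at h2
    have hsinprod : ∏ k ∈ Finset.range m, Real.sin (π * ((k:ℝ)+1) / n) = (n:ℝ) / 2 ^ m := by
      field_simp at h2 ⊢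
      linarith [h2]
    rw [hsinprod]
    field_simp
    ring
  rw [← Real.sqrt_mul_self hPpos.le, hsq]

lemma prod_Icc_one_eq_range (r : ℕ) (f : ℕ → ℝ) :
    ∏ k ∈ Finset.Icc 1 r, f k = ∏ k ∈ Finset.range r, f (1 + k) := by
  rw [← Finset.Ico_add_one_right_eq_Icc, Finset.prod_Ico_eq_prod_range]
  simp

lemma gamma_succ_prod (n r : ℕ) (hn : 1 ≤ n) :
    ∏ k ∈ Finset.range r, Real.Gamma ((1 + (k:ℝ)) / n + 1)
      = (Nat.factorial r : ℝ) / n ^ r * ∏ k ∈ Finset.range r, Real.Gamma ((1 + (k:ℝ)) / n) := by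
  have hnR : (0:ℝ) < (n:ℝ) := by exact_mod_cast hn
  have h1 : ∀ k ∈ Finset.range r, Real.Gamma ((1 + (k:ℝ)) / n + 1)
      = ((1 + (k:ℝ)) / n) * Real.Gamma ((1 + (k:ℝ)) / n) := fun k _ =>
    Real.Gamma_add_one (by positivity)
  rw [Finset.prod_congr rfl h1, Finset.prod_mul_distrib]
  congr 1
  rw [Finset.prod_div_distrib, Finset.prod_const, Finset.card_range]
  congr 1
  have := Finset.prod_range_add_one_eq_factorial r
  have := congrArg (Nat.cast : ℕ → ℝ) this
  push_cast at this
  rw [← this]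
  exact Finset.prod_congr rfl fun k _ => by ring

/-- for an integer `j ≥ 2` and real `s > 0`, the Mellin transform of the
product of the `j−1` independent Beta variables `β_k`:
`Π_{k=1}^{j−1} (∫_0^1 t^{s−1+k/j}(1−t)^{k/(j(j−1))−1} dt)/B(k/j+1, k/(j(j−1)))
  = (2π)^{−1/2}(j(j−1))^{−1/2} · j^j/(j−1)^{j−1} · Π_{k=1}^{j−1} Γ(s+k/j)/Γ(s+k/(j−1))`. -/
theorem beta_product_mellin {j : ℕ} (hj : 2 ≤ j) {s : ℝ} (hs : 0 < s) :
    ∏ k ∈ Finset.Icc 1 (j - 1),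
        (∫ t in (0:ℝ)..1,
            t ^ (s - 1 + (k : ℝ) / (j : ℝ)) *
              (1 - t) ^ ((k : ℝ) / ((j : ℝ) * ((j : ℝ) - 1)) - 1)) /
          betaFn ((k : ℝ) / (j : ℝ) + 1) ((k : ℝ) / ((j : ℝ) * ((j : ℝ) - 1)))
      = (1 / Real.sqrt (2 * π)) * (1 / Real.sqrt ((j : ℝ) * ((j : ℝ) - 1))) *
          ((j : ℝ) ^ j / ((j : ℝ) - 1) ^ (j - 1)) *
          ∏ k ∈ Finset.Icc 1 (j - 1),
            Real.Gamma (s + (k : ℝ) / (j : ℝ)) / Real.Gamma (s + (k : ℝ) / ((j : ℝ) - 1)) := by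
  set m : ℕ := j - 1 with hm
  have hm1 : 1 ≤ m := by omega
  have hjm : j = m + 1 := by omega
  have hJ : (2:ℝ) ≤ (j:ℝ) := by exact_mod_cast hj
  have hJ0 : (0:ℝ) < (j:ℝ) := by linarith
  have hM0 : (0:ℝ) < (j:ℝ) - 1 := by linarith
  have hMcast : ((j:ℝ) - 1) = (m:ℝ) := by
    rw [hjm]; push_cast; ring
  -- Step 1: rewrite each factor
  have hfac : ∀ k ∈ Finset.Icc 1 (j - 1),
      (∫ t in (0:ℝ)..1,
          t ^ (s - 1 + (k : ℝ) / (j : ℝ)) *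
            (1 - t) ^ ((k : ℝ) / ((j : ℝ) * ((j : ℝ) - 1)) - 1)) /
        betaFn ((k : ℝ) / (j : ℝ) + 1) ((k : ℝ) / ((j : ℝ) * ((j : ℝ) - 1)))
      = (Real.Gamma (s + (k : ℝ) / (j : ℝ)) / Real.Gamma (s + (k : ℝ) / ((j : ℝ) - 1))) *
        (Real.Gamma ((k : ℝ) / ((j : ℝ) - 1) + 1) / Real.Gamma ((k : ℝ) / (j : ℝ) + 1)) := by
    intro k hk
    obtain ⟨hk1, hk2⟩ := Finset.mem_Icc.mp hk
    have hkR : (0:ℝ) < (k:ℝ) := by exact_mod_cast hk1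
    have hc : (0:ℝ) < (k:ℝ) / ((j:ℝ) * ((j:ℝ) - 1)) := by positivity
    have ha : (0:ℝ) < s + (k:ℝ) / (j:ℝ) := by positivity
    rw [show s - 1 + (k:ℝ) / (j:ℝ) = (s + (k:ℝ) / (j:ℝ)) - 1 by ring,
      beta_integral_eq ha hc]
    have hsum1 : s + (k:ℝ) / (j:ℝ) + (k:ℝ) / ((j:ℝ) * ((j:ℝ) - 1)) = s + (k:ℝ) / ((j:ℝ) - 1) := by
      field_simp
      ring
    have hsum2 : (k:ℝ) / (j:ℝ) + 1 + (k:ℝ) / ((j:ℝ) * ((j:ℝ) - 1))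
        = (k:ℝ) / ((j:ℝ) - 1) + 1 := by
      field_simp
      ring
    rw [betaFn, betaFn, hsum1, hsum2]
    have g1 : Real.Gamma (s + (k:ℝ) / ((j:ℝ) - 1)) ≠ 0 :=
      (Real.Gamma_pos_of_pos (by positivity)).ne'
    have g2 : Real.Gamma ((k:ℝ) / (j:ℝ) + 1) ≠ 0 :=
      (Real.Gamma_pos_of_pos (by positivity)).ne'
    have g3 : Real.Gamma ((k:ℝ) / ((j:ℝ) * ((j:ℝ) - 1))) ≠ 0 :=
      (Real.Gamma_pos_of_pos hc).ne'
    have g4 : Real.Gamma ((k:ℝ) / ((j:ℝ) - 1) + 1) ≠ 0 :=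
      (Real.Gamma_pos_of_pos (by positivity)).ne'
    field_simp
  rw [Finset.prod_congr rfl hfac, Finset.prod_mul_distrib]
  rw [mul_comm (∏ k ∈ Finset.Icc 1 (j-1),
      Real.Gamma (s + (k : ℝ) / (j : ℝ)) / Real.Gamma (s + (k : ℝ) / ((j : ℝ) - 1))) _]
  congr 1
  -- Step 2: the constant product
  rw [← hm]
  rw [prod_Icc_one_eq_range m, Finset.prod_div_distrib]
  have hNum : ∏ k ∈ Finset.range m, Real.Gamma ((↑(1 + k) : ℝ) / ((j:ℝ) - 1) + 1)
      = (Nat.factorial m : ℝ) / m ^ m * Real.sqrt ((2 * π) ^ (m - 1) / m) := by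
    have e1 : ∀ k ∈ Finset.range m, Real.Gamma ((↑(1 + k) : ℝ) / ((j:ℝ) - 1) + 1)
        = Real.Gamma ((1 + (k:ℝ)) / (m:ℝ) + 1) := by
      intro k _; rw [hMcast]; push_cast; ring_nf
    rw [Finset.prod_congr rfl e1, gamma_succ_prod m m hm1]
    congr 1
    have e2 : ∏ k ∈ Finset.range m, Real.Gamma ((1 + (k:ℝ)) / (m:ℝ))
        = ∏ k ∈ Finset.range ((m - 1) + 1), Real.Gamma (((k:ℝ) + 1) / (m:ℝ)) := by
      rw [Nat.sub_add_cancel hm1]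
      exact Finset.prod_congr rfl fun k _ => by ring_nf
    rw [e2, Finset.prod_range_succ]
    have e3 : ((↑(m - 1) : ℝ) + 1) / (m:ℝ) = 1 := by
      have : ((m - 1 : ℕ) : ℝ) = (m:ℝ) - 1 := by
        have := Nat.cast_sub hm1 (R := ℝ); push_cast at this; linarith
      rw [this]
      field_simp
      ring
    rw [e3, Real.Gamma_one, mul_one, gamma_prod m hm1]
  have hDen : ∏ k ∈ Finset.range m, Real.Gamma ((↑(1 + k) : ℝ) / (j:ℝ) + 1)
      = (Nat.factorial m : ℝ) / j ^ m * Real.sqrt ((2 * π) ^ m / j) := by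
    have e1 : ∀ k ∈ Finset.range m, Real.Gamma ((↑(1 + k) : ℝ) / (j:ℝ) + 1)
        = Real.Gamma ((1 + (k:ℝ)) / (j:ℝ) + 1) := by
      intro k _; push_cast; ring_nf
    rw [Finset.prod_congr rfl e1, gamma_succ_prod j m (by omega)]
    congr 1
    have e2 : ∏ k ∈ Finset.range m, Real.Gamma ((1 + (k:ℝ)) / (j:ℝ))
        = ∏ k ∈ Finset.range (j - 1), Real.Gamma (((k:ℝ) + 1) / (j:ℝ)) := by
      rw [← hm]
      exact Finset.prod_congr rfl fun k _ => by ring_nf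
    rw [e2, gamma_prod j (by omega), ← hm]
  rw [hNum, hDen]
  -- Step 3: the numerical identity
  have hfct : (0:ℝ) < (Nat.factorial m : ℝ) := by exact_mod_cast Nat.factorial_pos m
  have hmR : (0:ℝ) < (m:ℝ) := by rw [← hMcast]; exact hM0
  have h2π : (0:ℝ) < 2 * π := by positivity
  have hsqrtm : Real.sqrt ((2 * π) ^ (m-1) / m) ≠ 0 := by
    positivity
  have key : Real.sqrt ((2 * π) ^ (m - 1) / (m:ℝ)) / Real.sqrt ((2 * π) ^ m / (j:ℝ))
      = Real.sqrt (j:ℝ) / (Real.sqrt (m:ℝ) * Real.sqrt (2 * π)) := by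
    have hA : (0:ℝ) ≤ (2 * π) ^ (m - 1) := by positivity
    rw [Real.sqrt_div hA, Real.sqrt_div (by positivity),
      show (2 * π) ^ m = (2 * π) ^ (m - 1) * (2 * π) by
        rw [← pow_succ]; congr 1; omega,
      Real.sqrt_mul hA]
    have n1 : Real.sqrt ((2 * π) ^ (m - 1)) ≠ 0 := by positivity
    have n2 : Real.sqrt (m:ℝ) ≠ 0 := by positivity
    have n3 : Real.sqrt (j:ℝ) ≠ 0 := by positivity
    have n4 : Real.sqrt (2 * π) ≠ 0 := by positivity
    field_simp
  have n2 : Real.sqrt (m:ℝ) ≠ 0 := by positivity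
  have n3 : Real.sqrt (j:ℝ) ≠ 0 := by positivity
  have n4 : Real.sqrt (2 * π) ≠ 0 := by positivity
  have n5 : ((m:ℝ)) ^ m ≠ 0 := by positivity
  have n6 : ((j:ℝ)) ^ m ≠ 0 := by positivity
  have n7 : Real.sqrt ((2 * π) ^ m / (j:ℝ)) ≠ 0 := by positivity
  rw [show (Nat.factorial m : ℝ) / m ^ m * Real.sqrt ((2 * π) ^ (m - 1) / m) /
      ((Nat.factorial m : ℝ) / j ^ m * Real.sqrt ((2 * π) ^ m / j))
      = ((j:ℝ) ^ m / (m:ℝ) ^ m) *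
        (Real.sqrt ((2 * π) ^ (m - 1) / (m:ℝ)) / Real.sqrt ((2 * π) ^ m / (j:ℝ))) by
    field_simp
    ]
  rw [key, hMcast, Real.sqrt_mul hJ0.le,
    show ((j:ℝ)) ^ j = ((j:ℝ)) ^ m * (j:ℝ) by rw [← pow_succ, ← hjm]]
  have hjsq : Real.sqrt (j:ℝ) * Real.sqrt (j:ℝ) = (j:ℝ) := Real.mul_self_sqrt hJ0.le
  rw [show ((j:ℝ)) ^ m * (j:ℝ) = ((j:ℝ)) ^ m * (Real.sqrt (j:ℝ) * Real.sqrt (j:ℝ)) by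
    rw [hjsq]]
  field_simp
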